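/- arXiv:1512.08400 — 3 statements merged into one kernel-verified Lean document; each statement's English description precedes it below -/
import Mathlib

section
/- Let χ be a real Dirichlet character (i.e., χ² = χ₀, the principal character). Then for all real σ > 1 and all real τ, one has L(σ, χ₀)³ · |L(σ+iτ, χ)|⁴ · |L(σ+2iτ, χ₀)| ≥ 1, and consequently, for σ ≥ 1 + ε with 0 < ε ≤ 1, |L(σ+iτ, χ)|⁻¹ ≪ ε⁻¹ with an absolute implied constant. -/
open Complex

lemma aux_sum_range_le {σ : ℝ} (hσ : 1 < σ) (N : ℕ) :
    ∑ i ∈ Finset.range N, ((1 : ℝ) + (i + 1 : ℕ)) ^ (-σ) ≤ 1 / (σ - 1) := by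
  have hanti : AntitoneOn (fun x : ℝ => x ^ (-σ)) (Set.Icc 1 (1 + (N : ℝ))) :=
    (Real.antitoneOn_rpow_Ioi_of_exponent_nonpos (by linarith)).mono
      (fun x hx => lt_of_lt_of_le zero_lt_one hx.1)
  have h := hanti.sum_le_integral
  have h1N : (1:ℝ) ≤ 1 + N := by
    have : (0:ℝ) ≤ N := Nat.cast_nonneg N
    linarith
  have hint : ∫ x in (1:ℝ)..(1 + N), x ^ (-σ) =
      ((1 + (N:ℝ)) ^ (-σ + 1) - 1 ^ (-σ + 1)) / (-σ + 1) := by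
    rw [integral_rpow (Or.inr ⟨by intro hc; simp at hc; linarith,
      by rw [Set.uIcc_of_le h1N]; intro hc; exact absurd hc.1 (by norm_num)⟩)]
  rw [hint, Real.one_rpow] at h
  refine h.trans ?_
  have hA : (0:ℝ) ≤ (1 + (N:ℝ)) ^ (-σ + 1) := Real.rpow_nonneg (by linarith) _
  have heq : ((1 + (N:ℝ)) ^ (-σ + 1) - 1) / (-σ + 1) =
      (1 - (1 + (N:ℝ)) ^ (-σ + 1)) / (σ - 1) := by
    rw [div_eq_div_iff (by linarith) (by linarith)]; ring
  rw [heq]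
  apply div_le_div_of_nonneg_right ?_ (by linarith) |>.trans_eq rfl
  · linarith

lemma aux_norm_LSeries_le {M : ℕ} (χ : DirichletCharacter ℂ M) {s : ℂ} (hs : 1 < s.re) :
    ‖LSeries (fun n : ℕ => χ (n : ZMod M)) s‖ ≤ 1 + 1 / (s.re - 1) := by
  have hsum : LSeriesSummable (fun n : ℕ => χ (n : ZMod M)) s :=
    DirichletCharacter.LSeriesSummable_of_one_lt_re χ hs
  have hsum1 : LSeriesSummable (fun _ : ℕ => (1:ℂ)) s :=
    LSeriesSummable_of_bounded_of_one_lt_re (m := 1) (fun n _ => by norm_num) hs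
  set g : ℕ → ℝ := fun n => ‖LSeries.term (fun _ : ℕ => (1:ℂ)) s n‖ with hg
  have hgsum : Summable g := hsum1.norm
  have hgval : ∀ n : ℕ, n ≠ 0 → g n = (n : ℝ) ^ (-s.re) := by
    intro n hn
    rw [hg]
    simp only [LSeries.norm_term_eq, if_neg hn, norm_one]
    rw [Real.rpow_neg (Nat.cast_nonneg n), one_div]
  have step1 : ‖LSeries (fun n : ℕ => χ (n : ZMod M)) s‖ ≤ ∑' n, g n := by
    refine (norm_tsum_le_tsum_norm hsum.norm).trans ?_
    refine Summable.tsum_le_tsum (fun n => LSeries.norm_term_le s ?_) hsum.norm hgsum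
    simpa using χ.norm_le_one _
  refine step1.trans ?_
  rw [Summable.tsum_eq_zero_add hgsum]
  have hg0 : g 0 = 0 := by simp [hg]
  have hgsum1 : Summable (fun n : ℕ => g (n + 1)) :=
    hgsum.comp_injective (add_left_injective 1)
  rw [hg0, zero_add, Summable.tsum_eq_zero_add hgsum1]
  have hg1 : g 1 = 1 := by
    rw [hgval 1 one_ne_zero]; simp
  rw [hg1]
  gcongr
  refine Real.tsum_le_of_sum_range_le (fun n => norm_nonneg _) (fun N => ?_)
  refine le_trans (le_of_eq ?_) (aux_sum_range_le hs N)
  refine Finset.sum_congr rfl (fun i _ => ?_)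
  rw [hgval (i + 1 + 1) (by omega)]
  push_cast
  ring_nf

/-- The 3-4-1 inequality for a real Dirichlet character and the resulting
lower bound |L(σ+iτ,χ)|⁻¹ ≪ ε⁻¹ for σ ≥ 1 + ε. -/
theorem stmt_2 :
    ∃ c : ℝ, 0 < c ∧
      ∀ (N : ℕ) (χ : DirichletCharacter ℂ N), χ ^ 2 = 1 →
        (∀ σ τ : ℝ, 1 < σ →
          1 ≤ (‖LSeries (fun n : ℕ => (1 : DirichletCharacter ℂ N) (n : ZMod N)) (σ : ℂ)‖) ^ 3 *
              (‖LSeries (fun n : ℕ => χ (n : ZMod N)) ((σ : ℂ) + (τ : ℂ) * Complex.I)‖) ^ 4 *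
              ‖LSeries (fun n : ℕ => (1 : DirichletCharacter ℂ N) (n : ZMod N))
                ((σ : ℂ) + 2 * (τ : ℂ) * Complex.I)‖) ∧
        (∀ ε σ τ : ℝ, 0 < ε → ε ≤ 1 → 1 + ε ≤ σ →
          (‖LSeries (fun n : ℕ => χ (n : ZMod N)) ((σ : ℂ) + (τ : ℂ) * Complex.I)‖)⁻¹
            ≤ c / ε) := by
  refine ⟨2, two_pos, fun N χ hχ => ?_⟩
  have key : ∀ σ τ : ℝ, 1 < σ →
      1 ≤ (‖LSeries (fun n : ℕ => (1 : DirichletCharacter ℂ N) (n : ZMod N)) (σ : ℂ)‖) ^ 3 *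
          (‖LSeries (fun n : ℕ => χ (n : ZMod N)) ((σ : ℂ) + (τ : ℂ) * Complex.I)‖) ^ 4 *
          ‖LSeries (fun n : ℕ => (1 : DirichletCharacter ℂ N) (n : ZMod N))
            ((σ : ℂ) + 2 * (τ : ℂ) * Complex.I)‖ := by
    intro σ τ hσ
    have h := DirichletCharacter.norm_LSeries_product_ge_one χ (x := σ - 1) (by linarith) τ
    rw [hχ, norm_mul, norm_mul, norm_pow, norm_pow] at h
    have e0 : (1:ℂ) + ((σ-1:ℝ):ℂ) = (σ:ℝ) := by push_cast; ring
    have e1 : (1:ℂ) + ((σ-1:ℝ):ℂ) + Complex.I * τ = (σ:ℂ) + τ * Complex.I := by push_cast; ring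
    have e2 : (1:ℂ) + ((σ-1:ℝ):ℂ) + 2 * Complex.I * τ = (σ:ℂ) + 2 * τ * Complex.I := by
      push_cast; ring
    rw [e1, e2, e0] at h
    simpa using h
  refine ⟨key, fun ε σ τ hε hε1 hσ => ?_⟩
  have hσ1 : 1 < σ := by linarith
  set B := ‖LSeries (fun n : ℕ => χ (n : ZMod N)) ((σ : ℂ) + (τ : ℂ) * Complex.I)‖
    with hB
  have hBnn : 0 ≤ B := norm_nonneg _
  have hKbound : ∀ s : ℂ, s.re = σ →
      ‖LSeries (fun n : ℕ => (1 : DirichletCharacter ℂ N) (n : ZMod N)) s‖ ≤ 2 / ε := by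
    intro s hsre
    have h := aux_norm_LSeries_le (1 : DirichletCharacter ℂ N) (s := s) (by rw [hsre]; exact hσ1)
    refine h.trans ?_
    rw [hsre]
    have h1 : (1:ℝ) ≤ 1/ε := one_le_one_div hε hε1
    have h2 : 1/(σ-1) ≤ 1/ε := one_div_le_one_div_of_le hε (by linarith)
    calc 1 + 1/(σ-1) ≤ 1/ε + 1/ε := by linarith
      _ = 2/ε := by ring
  have hA := hKbound (σ : ℂ) (by simp)
  have hC := hKbound ((σ : ℂ) + 2 * τ * Complex.I) (by simp)
  have h341 := key σ τ hσ1
  have hK : (0:ℝ) < 2/ε := by positivity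
  have h1 : 1 ≤ (2/ε)^3 * B^4 * (2/ε) := by
    refine h341.trans ?_
    gcongr
  have h1' : 1 ≤ 16 * B ^ 4 / ε ^ 4 := by
    refine h1.trans_eq ?_
    field_simp
    ring
  have h1'' : ε ^ 4 ≤ 16 * B ^ 4 := by
    rwa [le_div_iff₀ (by positivity), one_mul] at h1'
  have h2 : (ε/2)^4 ≤ B^4 := by
    rw [div_pow, div_le_iff₀ (by positivity)]
    norm_num
    linarith
  have h3 : ε/2 ≤ B := le_of_pow_le_pow_left₀ (by norm_num) hBnn h2
  have hB0 : 0 < B := lt_of_lt_of_le (by positivity) h3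
  calc B⁻¹ ≤ (ε/2)⁻¹ := inv_anti₀ (by positivity) h3
    _ = 2/ε := by rw [inv_div]
end

section
/- Let y ≥ 2, u ≥ 1, and ρ the Dickman function (ρ(t) = 1 for 0 ≤ t ≤ 1, tρ'(t) = −ρ(t−1) for t > 1). Then ∫₀^{2u} y^{−v/2} ρ(2u − v) dv = (2/log y)·ρ(2u)·(1 + O(1/√(log y))), where the implied constant is absolute for u in a fixed bounded range. -/
open Set MeasureTheory intervalIntegral Filter Topology

lemma ftc1 (f g : ℝ → ℝ) (b : ℝ) (hb : 1 ≤ b)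
    (hd : ∀ x, 1 < x → HasDerivAt f (g x) x)
    (hfc : ContinuousWithinAt f (Set.Ici 1) 1)
    (hgc : ContinuousOn g (Set.Icc 1 b)) :
    f b - f 1 = ∫ s in (1:ℝ)..b, g s := by
  rcases eq_or_lt_of_le hb with rfl | hb
  · simp
  have hIg : IntervalIntegrable g volume 1 b := by
    apply ContinuousOn.intervalIntegrable
    rwa [uIcc_of_le hb.le]
  have key : ∀ᶠ a in 𝓝[>] (1:ℝ), f b - f a = ∫ s in a..b, g s := by
    have hmem : Set.Ioc (1:ℝ) b ∈ 𝓝[>] (1:ℝ) := by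
      rw [← Set.Ioi_inter_Iic]
      exact inter_mem self_mem_nhdsWithin
        (mem_nhdsWithin_of_mem_nhds (Iic_mem_nhds hb))
    filter_upwards [hmem] with a ha
    symm
    apply intervalIntegral.integral_eq_sub_of_hasDerivAt
    · intro x hx
      rw [uIcc_of_le ha.2] at hx
      exact hd x (lt_of_lt_of_le ha.1 hx.1)
    · apply ContinuousOn.intervalIntegrable
      apply hgc.mono
      rw [uIcc_of_le ha.2]
      exact Icc_subset_Icc ha.1.le le_rfl
  have t1 : Tendsto (fun a => f b - f a) (𝓝[>] (1:ℝ)) (𝓝 (f b - f 1)) := by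
    apply Tendsto.const_sub
    exact hfc.tendsto.mono_left (nhdsWithin_mono _ Ioi_subset_Ici_self)
  have t2 : Tendsto (fun a => ∫ s in a..b, g s) (𝓝[>] (1:ℝ))
      (𝓝 (∫ s in (1:ℝ)..b, g s)) := by
    have hc : ContinuousOn (fun a => ∫ s in a..b, g s) (Set.Icc 1 b) := by
      have := intervalIntegral.continuousOn_primitive_interval_left
        (f := g) (a := (1:ℝ)) (b := b) (μ := volume) ?_
      · rwa [uIcc_of_le hb.le] at this
      · rw [uIcc_of_le hb.le]
        exact hgc.integrableOn_Icc
    have := (hc 1 (Set.left_mem_Icc.2 hb.le)).tendsto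
    refine this.mono_left ?_
    rw [← nhdsWithin_Ioc_eq_nhdsGT hb]
    exact nhdsWithin_mono _ Set.Ioc_subset_Icc_self
  exact tendsto_nhds_unique (t1.congr' key) t2

section
variable (ρ : ℝ → ℝ)
    (h01 : ∀ t : ℝ, 0 ≤ t → t ≤ 1 → ρ t = 1)
    (hderiv : ∀ t : ℝ, 1 < t → HasDerivAt ρ (-(ρ (t - 1)) / t) t)
    (hcont : ContinuousOn ρ (Set.Ici (0 : ℝ)))

include hcont in
lemma rho_contOn1 (b : ℝ) : ContinuousOn (fun s => -(ρ (s-1)) / s) (Set.Icc 1 b) := by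
  apply ContinuousOn.div
  · apply ContinuousOn.neg
    apply hcont.comp (by fun_prop : Continuous fun s : ℝ => s - 1).continuousOn
    intro s hs; simpa using hs.1
  · fun_prop
  · intro s hs; intro h; rw [h] at hs; simp at hs; linarith [hs.1]

include hderiv hcont in
lemma rho_sub (a b : ℝ) (ha : 1 ≤ a) (hab : a ≤ b) :
    ρ b - ρ a = ∫ s in a..b, -(ρ (s-1)) / s := by
  have hfc : ContinuousWithinAt ρ (Set.Ici 1) 1 :=
    (hcont 1 (by norm_num)).mono (Set.Ici_subset_Ici.2 zero_le_one)
  have e1 := ftc1 ρ (fun s => -(ρ (s-1))/s) b (ha.trans hab) hderiv hfc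
    (rho_contOn1 ρ hcont b)
  have e2 := ftc1 ρ (fun s => -(ρ (s-1))/s) a ha hderiv hfc
    (rho_contOn1 ρ hcont a)
  have hi : ∀ c d : ℝ, 1 ≤ c → c ≤ d → IntervalIntegrable (fun s => -(ρ (s-1))/s) volume c d := by
    intro c d hc hcd
    apply ContinuousOn.intervalIntegrable
    rw [uIcc_of_le hcd]
    exact (rho_contOn1 ρ hcont d).mono (Set.Icc_subset_Icc hc le_rfl)
  have := intervalIntegral.integral_add_adjacent_intervals (hi 1 a le_rfl ha) (hi a b ha hab)
  linarith [e1, e2, this]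

include h01 hderiv hcont in
lemma rho_id (b : ℝ) (hb : 1 ≤ b) : b * ρ b = ∫ s in (b-1)..b, ρ s := by
  have hfc : ContinuousWithinAt ρ (Set.Ici 1) 1 :=
    (hcont 1 (by norm_num)).mono (Set.Ici_subset_Ici.2 zero_le_one)
  have hIccb : ∀ c d : ℝ, 0 ≤ c → ContinuousOn ρ (Set.Icc c d) :=
    fun c d hc => hcont.mono (fun x hx => hc.trans hx.1)
  have e := ftc1 (fun t => t * ρ t) (fun s => ρ s - ρ (s-1)) b hb
    (fun x hx => by
      have := (hasDerivAt_id x).mul (hderiv x hx)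
      refine this.congr_deriv ?_
      simp only [id_eq]
      field_simp [show x ≠ 0 by linarith]
      ring)
    (continuousWithinAt_id.mul hfc)
    (by
      apply ContinuousOn.sub
      · exact (hIccb 1 b zero_le_one)
      · apply hcont.comp (by fun_prop : Continuous fun s : ℝ => s - 1).continuousOn
        intro s hs; simpa using hs.1)
  have hr1 : ρ 1 = 1 := h01 1 zero_le_one le_rfl
  have hcomp : (∫ s in (1:ℝ)..b, ρ (s-1)) = ∫ s in (0:ℝ)..(b-1), ρ s := by
    have := intervalIntegral.integral_comp_sub_right (a := (1:ℝ)) (b := b) (fun s => ρ s) 1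
    simpa using this
  have hsplit : (∫ s in (1:ℝ)..b, (ρ s - ρ (s-1)))
      = (∫ s in (1:ℝ)..b, ρ s) - ∫ s in (0:ℝ)..(b-1), ρ s := by
    rw [intervalIntegral.integral_sub, hcomp]
    · apply ContinuousOn.intervalIntegrable; rw [uIcc_of_le hb]
      exact hIccb 1 b zero_le_one
    · apply ContinuousOn.intervalIntegrable; rw [uIcc_of_le hb]
      apply hcont.comp (by fun_prop : Continuous fun s : ℝ => s - 1).continuousOn
      intro s hs; simp at hs ⊢; linarith [hs.1]
  have hint : ∀ c d : ℝ, 0 ≤ c → c ≤ d → IntervalIntegrable ρ volume c d := by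
    intro c d hc hcd
    apply ContinuousOn.intervalIntegrable
    rw [uIcc_of_le hcd]; exact hIccb c d hc
  have hb1 : (0:ℝ) ≤ b - 1 := by linarith
  have a1 := intervalIntegral.integral_add_adjacent_intervals
    (hint 0 1 le_rfl zero_le_one) (hint 1 b zero_le_one hb)
  have a2 := intervalIntegral.integral_add_adjacent_intervals
    (hint 0 (b-1) le_rfl hb1) (hint (b-1) b hb1 (by linarith))
  have h011 : (∫ s in (0:ℝ)..1, ρ s) = 1 := by
    rw [intervalIntegral.integral_congr (g := fun _ => (1:ℝ))
      (fun x hx => by rw [uIcc_of_le zero_le_one] at hx; exact h01 x hx.1 hx.2)]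
    simp
  rw [hsplit] at e
  rw [hr1] at e
  linarith


include h01 hderiv hcont in
lemma rho_pos (t : ℝ) (ht : 0 ≤ t) : 0 < ρ t := by
  by_contra h
  push_neg at h
  set S : Set ℝ := {x | 0 ≤ x ∧ ρ x ≤ 0} with hS
  have hne : S.Nonempty := ⟨t, ht, h⟩
  have hbdd : BddBelow S := ⟨0, fun x hx => hx.1⟩
  have hclosed : IsClosed S := by
    have : S = Set.Ici 0 ∩ ρ ⁻¹' (Set.Iic 0) := by
      ext x; simp [hS, Set.mem_setOf_eq, and_comm]
    rw [this]
    exact hcont.preimage_isClosed_of_isClosed isClosed_Ici isClosed_Iic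
  have hTmem : sInf S ∈ S := hclosed.csInf_mem hne hbdd
  set T := sInf S with hT
  have hT0 : 0 ≤ T := hTmem.1
  have hTρ : ρ T ≤ 0 := hTmem.2
  have hT1 : 1 < T := by
    by_contra hc
    push_neg at hc
    rw [h01 T hT0 hc] at hTρ; linarith
  have hid := rho_id ρ h01 hderiv hcont T hT1.le
  have hpos : 0 < ∫ s in (T-1)..T, ρ s := by
    apply intervalIntegral.intervalIntegral_pos_of_pos_on
    · apply ContinuousOn.intervalIntegrable
      rw [uIcc_of_le (by linarith)]
      exact hcont.mono (fun x hx => by simp at hx ⊢; linarith [hx.1])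
    · intro x hx
      have hx0 : 0 ≤ x := by rcases hx with ⟨h1, h2⟩; linarith
      by_contra hc
      push_neg at hc
      have : T ≤ x := csInf_le hbdd ⟨hx0, hc⟩
      linarith [hx.2]
    · linarith
  rw [← hid] at hpos
  nlinarith

include h01 hderiv hcont in
lemma rho_anti (a b : ℝ) (ha : 0 ≤ a) (hab : a ≤ b) : ρ b ≤ ρ a := by
  have key : ∀ c d : ℝ, 1 ≤ c → c ≤ d → ρ d ≤ ρ c := by
    intro c d hc hcd
    have := rho_sub ρ hderiv hcont c d hc hcd
    have hnp : (∫ s in c..d, -(ρ (s-1)) / s) ≤ 0 := by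
      have hnn : 0 ≤ ∫ s in c..d, ρ (s-1) / s := by
        apply intervalIntegral.integral_nonneg hcd
        intro x hx
        have h1 : 0 ≤ ρ (x-1) := (rho_pos ρ h01 hderiv hcont (x-1) (by linarith [hx.1])).le
        have h2 : (0:ℝ) < x := by linarith [hx.1]
        exact div_nonneg h1 h2.le
      have : (∫ s in c..d, -(ρ (s-1)) / s) = -∫ s in c..d, ρ (s-1) / s := by
        rw [← intervalIntegral.integral_neg]; congr 1; ext s; ring
      linarith
    linarith
  rcases le_or_gt b 1 with hb | hb
  · rw [h01 a ha (hab.trans hb), h01 b (ha.trans hab) hb]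
  rcases le_or_gt 1 a with ha1 | ha1
  · exact key a b ha1 hab
  · rw [h01 a ha ha1.le]
    calc ρ b ≤ ρ 1 := key 1 b le_rfl hb.le
    _ = 1 := h01 1 zero_le_one le_rfl

include h01 hderiv hcont in
lemma rho_le_one (t : ℝ) (ht : 0 ≤ t) : ρ t ≤ 1 := by
  calc ρ t ≤ ρ 0 := rho_anti ρ h01 hderiv hcont 0 t le_rfl ht
  _ = 1 := h01 0 le_rfl zero_le_one

include h01 hderiv hcont in
lemma rho_lip (a b : ℝ) (ha : 0 ≤ a) (hab : a ≤ b) : ρ a - ρ b ≤ b - a := by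
  have key : ∀ c d : ℝ, 1 ≤ c → c ≤ d → ρ c - ρ d ≤ d - c := by
    intro c d hc hcd
    have hsub := rho_sub ρ hderiv hcont c d hc hcd
    have : -(∫ s in c..d, -(ρ (s-1)) / s) = ∫ s in c..d, ρ (s-1) / s := by
      rw [← intervalIntegral.integral_neg]; congr 1; ext s; ring
    have hle : (∫ s in c..d, ρ (s-1) / s) ≤ ∫ s in c..d, (1:ℝ) := by
      apply intervalIntegral.integral_mono_on hcd
      · have := (rho_contOn1 ρ hcont d).neg
        apply ContinuousOn.intervalIntegrable
        rw [uIcc_of_le hcd]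
        apply ContinuousOn.mono _ (Set.Icc_subset_Icc hc le_rfl)
        convert this using 1
        ext s; simp only [Pi.neg_apply]; ring
      · exact intervalIntegrable_const
      · intro x hx
        have h1x : (1:ℝ) ≤ x := hc.trans hx.1
        rw [div_le_one (by linarith)]
        calc ρ (x-1) ≤ 1 := rho_le_one ρ h01 hderiv hcont (x-1) (by linarith)
        _ ≤ x := h1x
    simp only [intervalIntegral.integral_const, smul_eq_mul, mul_one] at hle
    linarith
  rcases le_or_gt b 1 with hb | hb
  · rw [h01 a ha (hab.trans hb), h01 b (ha.trans hab) hb]; linarith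
  rcases le_or_gt 1 a with ha1 | ha1
  · exact key a b ha1 hab
  · rw [h01 a ha ha1.le]
    have h1 : ρ 1 - ρ b ≤ b - 1 := key 1 b le_rfl hb.le
    rw [h01 1 zero_le_one le_rfl] at h1
    linarith

end

lemma exp_integral (c A : ℝ) (hc : 0 < c) :
    ∫ v in (0:ℝ)..A, Real.exp (-(c*v)) = (1 - Real.exp (-(c*A)))/c := by
  have hd : ∀ v ∈ uIcc (0:ℝ) A,
      HasDerivAt (fun w => -(1/c) * Real.exp (-(c*w))) (Real.exp (-(c*v))) v := by
    intro v _
    have h1 : HasDerivAt (fun w : ℝ => -(c*w)) (-c) v := by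
      simpa using (hasDerivAt_id v).const_mul (-c)
    have h2 := h1.exp.const_mul (-(1/c))
    refine h2.congr_deriv ?_
    field_simp
  rw [intervalIntegral.integral_eq_sub_of_hasDerivAt hd
    ((by fun_prop : Continuous fun v => Real.exp (-(c*v))).intervalIntegrable _ _)]
  field_simp
  simp only [mul_zero, neg_zero, Real.exp_zero]
  ring

lemma xexp_le (x : ℝ) (hx : 0 ≤ x) : x * Real.exp (-x) ≤ 1 := by
  have h1 := Real.add_one_le_exp x
  have h2 := Real.exp_pos x
  rw [Real.exp_neg, ← div_eq_mul_inv, div_le_one h2]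
  linarith

set_option maxHeartbeats 1000000 in
/-- Laplace-type evaluation of ∫₀^{2u} y^{−v/2} ρ(2u−v) dv for the Dickman
function ρ: it equals (2/log y)·ρ(2u)·(1 + O(1/√(log y))) uniformly for u in a
bounded range. -/
theorem stmt_14 (ρ : ℝ → ℝ)
    (h01 : ∀ t : ℝ, 0 ≤ t → t ≤ 1 → ρ t = 1)
    (hderiv : ∀ t : ℝ, 1 < t → HasDerivAt ρ (-(ρ (t - 1)) / t) t)
    (hcont : ContinuousOn ρ (Set.Ici (0 : ℝ)))
    (U : ℝ) (hU : 1 ≤ U) :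
    ∃ C : ℝ, 0 < C ∧ ∀ y u : ℝ, 2 ≤ y → 1 ≤ u → u ≤ U →
      |(∫ v in (0 : ℝ)..(2 * u), y ^ (-(v / 2)) * ρ (2 * u - v)) -
        2 / Real.log y * ρ (2 * u)| ≤
      C * (2 / Real.log y) * ρ (2 * u) / Real.sqrt (Real.log y) := by
  have hP : 0 < ρ (2*U) := rho_pos ρ h01 hderiv hcont (2*U) (by linarith)
  have hlog2 : (0:ℝ) < Real.log 2 := Real.log_pos (by norm_num)
  have hslog2 : (0:ℝ) < Real.sqrt (Real.log 2) := Real.sqrt_pos.2 hlog2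
  set P := ρ (2*U) with hPdef
  refine ⟨(8/P + 1)/Real.sqrt (Real.log 2), by positivity, ?_⟩
  intro y u hy hu huU
  set L := Real.log y with hLdef
  have hL2 : Real.log 2 ≤ L := Real.log_le_log (by norm_num) hy
  have hL0 : 0 < L := lt_of_lt_of_le hlog2 hL2
  have hy0 : (0:ℝ) < y := by linarith
  have hu0 : (0:ℝ) ≤ 2*u := by linarith
  set s := Real.sqrt L with hsdef
  have hs0 : 0 < s := Real.sqrt_pos.2 hL0
  have hss : s * s = L := Real.mul_self_sqrt hL0.le
  have hsl2 : Real.sqrt (Real.log 2) ≤ s := Real.sqrt_le_sqrt hL2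
  -- rewrite integrand
  have hrw : (∫ v in (0:ℝ)..(2*u), y ^ (-(v / 2)) * ρ (2*u - v))
      = ∫ v in (0:ℝ)..(2*u), Real.exp (-(L/2*v)) * ρ (2*u - v) := by
    apply intervalIntegral.integral_congr
    intro v _
    simp only
    rw [Real.rpow_def_of_pos hy0, ← hLdef]
    congr 1
    ring
  -- integrability
  have hcρ : ContinuousOn (fun v => ρ (2*u - v)) (Set.Icc 0 (2*u)) := by
    apply hcont.comp (by fun_prop : Continuous fun v : ℝ => 2*u - v).continuousOn
    intro v hv
    simp at hv ⊢
    linarith [hv.2]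
  have hint1 : IntervalIntegrable (fun v => Real.exp (-(L/2*v)) * (ρ (2*u - v) - ρ (2*u)))
      volume 0 (2*u) := by
    apply ContinuousOn.intervalIntegrable
    rw [uIcc_of_le hu0]
    exact (((by fun_prop : Continuous fun v : ℝ => Real.exp (-(L/2*v))).continuousOn).mul
      (hcρ.sub continuousOn_const))
  have hint2 : IntervalIntegrable (fun v => Real.exp (-(L/2*v))) volume 0 (2*u) :=
    ((by fun_prop : Continuous fun v : ℝ => Real.exp (-(L/2*v))).intervalIntegrable _ _)
  -- decompose
  have hdecomp : (∫ v in (0:ℝ)..(2*u), Real.exp (-(L/2*v)) * ρ (2*u - v))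
      = (∫ v in (0:ℝ)..(2*u), Real.exp (-(L/2*v)) * (ρ (2*u - v) - ρ (2*u)))
        + ρ (2*u) * ∫ v in (0:ℝ)..(2*u), Real.exp (-(L/2*v)) := by
    rw [← intervalIntegral.integral_const_mul, ← intervalIntegral.integral_add hint1
      (hint2.const_mul _)]
    apply intervalIntegral.integral_congr
    intro v _
    ring
  have hE : (∫ v in (0:ℝ)..(2*u), Real.exp (-(L/2*v))) = (1 - Real.exp (-(L*u)))/(L/2) := by
    have := exp_integral (L/2) (2*u) (by positivity)
    rw [this]
    ring_nf
  -- bound J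
  set R := ρ (2*u) with hRdef
  have hρu : P ≤ R := rho_anti ρ h01 hderiv hcont (2*u) (2*U) (by linarith) (by linarith)
  have hR0 : 0 < R := lt_of_lt_of_le hP hρu
  set J := ∫ v in (0:ℝ)..(2*u), Real.exp (-(L/2*v)) * (ρ (2*u - v) - R) with hJ
  have hJbound : |J| ≤ 16/(L*L) := by
    have hgint : IntervalIntegrable (fun v => (4/L) * Real.exp (-(L/4*v))) volume 0 (2*u) :=
      ((by fun_prop : Continuous fun v : ℝ => (4/L) * Real.exp (-(L/4*v))).intervalIntegrable _ _)
    have hae : ∀ᵐ t ∂(volume.restrict (Set.uIoc (0:ℝ) (2*u))),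
        ‖Real.exp (-(L/2*t)) * (ρ (2*u - t) - R)‖ ≤ (4/L) * Real.exp (-(L/4*t)) := by
      rw [Set.uIoc_of_le hu0]
      apply MeasureTheory.ae_restrict_of_forall_mem measurableSet_Ioc
      intro t ht
      have ht0 : 0 < t := ht.1
      have ht2 : t ≤ 2*u := ht.2
      have hdnn : 0 ≤ ρ (2*u - t) - R :=
        sub_nonneg.2 (rho_anti ρ h01 hderiv hcont (2*u - t) (2*u) (by linarith) (by linarith))
      have hdle : ρ (2*u - t) - R ≤ t := by
        have := rho_lip ρ h01 hderiv hcont (2*u - t) (2*u) (by linarith) (by linarith)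
        linarith
      have hE0 : (0:ℝ) < Real.exp (-(L/2*t)) := Real.exp_pos _
      rw [Real.norm_eq_abs, abs_mul, abs_of_pos hE0, abs_of_nonneg hdnn]
      have h1 : Real.exp (-(L/2*t)) * (ρ (2*u - t) - R) ≤ Real.exp (-(L/2*t)) * t :=
        mul_le_mul_of_nonneg_left hdle hE0.le
      have hsplit : Real.exp (-(L/2*t)) = Real.exp (-(L/4*t)) * Real.exp (-(L/4*t)) := by
        rw [← Real.exp_add]; congr 1; ring
      have h2 : t * Real.exp (-(L/4*t)) ≤ 4/L := by
        have := xexp_le (L/4*t) (by positivity)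
        have h4 : (0:ℝ) < 4/L := by positivity
        rw [show t * Real.exp (-(L/4*t)) = (4/L) * ((L/4*t) * Real.exp (-(L/4*t))) by
          field_simp]
        nlinarith [Real.exp_pos (-(L/4*t))]
      calc Real.exp (-(L/2*t)) * (ρ (2*u - t) - R) ≤ Real.exp (-(L/2*t)) * t := h1
        _ = Real.exp (-(L/4*t)) * (t * Real.exp (-(L/4*t))) := by rw [hsplit]; ring
        _ ≤ Real.exp (-(L/4*t)) * (4/L) :=
            mul_le_mul_of_nonneg_left h2 (Real.exp_pos _).le
        _ = (4/L) * Real.exp (-(L/4*t)) := by ring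
    have habs := intervalIntegral.norm_integral_le_of_norm_le hu0
      (by rw [Set.uIoc_of_le hu0, MeasureTheory.ae_restrict_iff' measurableSet_Ioc] at hae; exact hae) hgint
    have hval : (∫ v in (0:ℝ)..(2*u), (4/L) * Real.exp (-(L/4*v))) ≤ 16/(L*L) := by
      rw [intervalIntegral.integral_const_mul, exp_integral (L/4) (2*u) (by positivity)]
      have h1 : 0 < Real.exp (-(L/4*(2*u))) := Real.exp_pos _
      have heq2 : 4/L * ((1 - Real.exp (-(L/4*(2*u))))/(L/4))
          = (16 - 16*Real.exp (-(L/4*(2*u))))/(L*L) := by field_simp; ring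
      rw [heq2, div_le_div_iff₀ (by positivity) (by positivity)]
      nlinarith
    have hvnn : (0:ℝ) ≤ ∫ v in (0:ℝ)..(2*u), (4/L) * Real.exp (-(L/4*v)) := by
      apply intervalIntegral.integral_nonneg hu0
      intro x _
      positivity
    rw [Real.norm_eq_abs] at habs
    linarith
  -- exp decay
  have hexp : Real.exp (-(L*u)) ≤ 1/L := by
    have h1 : Real.exp (-(L*u)) ≤ Real.exp (-L) := by
      apply Real.exp_le_exp.2
      nlinarith
    have h2 : Real.exp (-L) ≤ 1/L := by
      rw [Real.exp_neg, one_div]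
      apply inv_anti₀ hL0
      linarith [Real.add_one_le_exp L]
    linarith
  -- assemble
  rw [hrw, hdecomp, hE]
  have heq : J + R * ((1 - Real.exp (-(L*u)))/(L/2)) - 2/L * R
      = J - (2/L) * Real.exp (-(L*u)) * R := by
    field_simp
    ring
  rw [heq]
  have habs2 : |J - (2/L) * Real.exp (-(L*u)) * R| ≤ 16/(L*L) + 2*R/(L*L) := by
    have h1 : (0:ℝ) ≤ (2/L) * Real.exp (-(L*u)) * R := by positivity
    have h2 : (2/L) * Real.exp (-(L*u)) * R ≤ (2/L) * (1/L) * R := by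
      apply mul_le_mul_of_nonneg_right _ hR0.le
      exact mul_le_mul_of_nonneg_left hexp (by positivity)
    calc |J - (2/L) * Real.exp (-(L*u)) * R| ≤ |J| + (2/L) * Real.exp (-(L*u)) * R := by
          rw [abs_sub_comm]
          calc _ ≤ |(2/L) * Real.exp (-(L*u)) * R| + |J| := abs_sub _ _
            _ = (2/L) * Real.exp (-(L*u)) * R + |J| := by rw [abs_of_nonneg h1]
            _ = |J| + (2/L) * Real.exp (-(L*u)) * R := by ring
      _ ≤ 16/(L*L) + (2/L) * (1/L) * R := by linarith
      _ = 16/(L*L) + 2*R/(L*L) := by ring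
  refine habs2.trans ?_
  -- final algebra
  have hsls : Real.sqrt (Real.log 2) * s ≤ L := by
    nlinarith
  have key : (16 + 2*R) * (Real.sqrt (Real.log 2) * s) * P ≤ (16*R + 2*P*R) * L := by
    have k1 : (16+2*R)*(Real.sqrt (Real.log 2)*s)*P ≤ (16+2*R)*L*P := by
      have h := mul_le_mul_of_nonneg_left hsls (show (0:ℝ) ≤ 16+2*R by linarith)
      exact mul_le_mul_of_nonneg_right h hP.le
    have hk : (16+2*R)*P ≤ 16*R+2*P*R := by nlinarith
    have k2 : (16+2*R)*L*P ≤ (16*R+2*P*R)*L := by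
      calc (16+2*R)*L*P = ((16+2*R)*P)*L := by ring
      _ ≤ (16*R+2*P*R)*L := mul_le_mul_of_nonneg_right hk hL0.le
    linarith
  have lhs_eq : 16/(L*L) + 2*R/(L*L) = (16+2*R)/(L*L) := by ring
  have rhs_eq : (8/P + 1)/Real.sqrt (Real.log 2) * (2/L) * R / s
      = ((8+P)*(2*R))/(P*(Real.sqrt (Real.log 2)*(L*s))) := by
    field_simp
  rw [lhs_eq, rhs_eq, div_le_div_iff₀ (by positivity) (by positivity)]
  nlinarith [mul_le_mul_of_nonneg_left key hL0.le]
end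

section
/- Let κ be the unique solution in (1, ∞) of ρ(2κ) = 2·log κ, where ρ is the Dickman function. Then κ > 10/9. -/
open Real Set

private lemma mono_aux {f f' : ℝ → ℝ} {a b : ℝ}
    (hc : ContinuousOn f (Icc a b))
    (hd : ∀ x ∈ Ioo a b, HasDerivAt f (f' x) x)
    (hnn : ∀ x ∈ Ioo a b, 0 ≤ f' x) : MonotoneOn f (Icc a b) := by
  apply monotoneOn_of_deriv_nonneg (convex_Icc a b) hc
  · rw [interior_Icc]
    exact fun x hx => ((hd x hx).differentiableAt).differentiableWithinAt
  · rw [interior_Icc]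
    intro x hx
    rw [(hd x hx).deriv]
    exact hnn x hx

private lemma log_ge_aux {x : ℝ} (h0 : 0 ≤ x) (h1 : x ≤ 1) :
    x - x^2/2 ≤ Real.log (1+x) := by
  have hm : MonotoneOn (fun y => Real.log (1+y) - (y - y^2/2)) (Icc (0:ℝ) 1) := by
    apply mono_aux (f' := fun y => 1/(1+y) - (1 - y))
    · apply ContinuousOn.sub
      · apply ContinuousOn.log (by fun_prop)
        intro y hy; nlinarith [hy.1]
      · fun_prop
    · intro y hy
      have hne : (1:ℝ) + y ≠ 0 := by nlinarith [hy.1]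
      have hlog : HasDerivAt (fun y : ℝ => Real.log (1+y)) (1/(1+y)) y := by
        simpa using (((hasDerivAt_id y).const_add 1).log hne)
      have hpoly : HasDerivAt (fun y : ℝ => y - y^2/2) (1 - y) y := by
        have := (hasDerivAt_id y).sub ((hasDerivAt_pow 2 y).div_const 2)
        exact this.congr_deriv (by ring)
      exact hlog.sub hpoly
    · intro y hy
      have hpos : (0:ℝ) < 1 + y := by nlinarith [hy.1]
      rw [sub_nonneg, ← sub_nonneg]
      have : 1/(1+y) - (1-y) = y^2/(1+y) := by field_simp; ring
      rw [this]
      exact div_nonneg (by nlinarith [hy.1]) hpos.le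
  have := hm (Set.left_mem_Icc.2 zero_le_one) ⟨h0, h1⟩ h0
  simpa using this

private lemma log_le_aux {x : ℝ} (h0 : 0 ≤ x) (h1 : x ≤ 1) :
    Real.log (1+x) ≤ x - x^2/2 + x^3/3 := by
  have hm : MonotoneOn (fun y => (y - y^2/2 + y^3/3) - Real.log (1+y)) (Icc (0:ℝ) 1) := by
    apply mono_aux (f' := fun y => (1 - y + y^2) - 1/(1+y))
    · apply ContinuousOn.sub (by fun_prop)
      apply ContinuousOn.log (by fun_prop)
      intro y hy; nlinarith [hy.1]
    · intro y hy
      have hne : (1:ℝ) + y ≠ 0 := by nlinarith [hy.1]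
      have hlog : HasDerivAt (fun y : ℝ => Real.log (1+y)) (1/(1+y)) y := by
        simpa using (((hasDerivAt_id y).const_add 1).log hne)
      have hpoly : HasDerivAt (fun y : ℝ => y - y^2/2 + y^3/3) (1 - y + y^2) y := by
        have := ((hasDerivAt_id y).sub ((hasDerivAt_pow 2 y).div_const 2)).add
          ((hasDerivAt_pow 3 y).div_const 3)
        exact this.congr_deriv (by ring)
      exact hpoly.sub hlog
    · intro y hy
      have hpos : (0:ℝ) < 1 + y := by nlinarith [hy.1]
      have : (1 - y + y^2) - 1/(1+y) = y^3/(1+y) := by field_simp; ring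
      rw [this]
      exact div_nonneg (by nlinarith [hy.1]) hpos.le
  have := hm (Set.left_mem_Icc.2 zero_le_one) ⟨h0, h1⟩ h0
  simp at this
  linarith [this]

/-- The unique solution κ > 1 of ρ(2κ) = 2 log κ, where ρ is the Dickman
function, satisfies κ > 10/9. -/
theorem stmt_15 (ρ : ℝ → ℝ)
    (h01 : ∀ t : ℝ, 0 ≤ t → t ≤ 1 → ρ t = 1)
    (hderiv : ∀ t : ℝ, 1 < t → HasDerivAt ρ (-(ρ (t - 1)) / t) t)
    (hcont : ContinuousOn ρ (Set.Ici (0 : ℝ)))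
    (κ : ℝ) (hκ : 1 < κ) (heq : ρ (2 * κ) = 2 * Real.log κ) :
    10 / 9 < κ := by
  by_contra hcon
  push_neg at hcon
  -- Step 1: ρ t = 1 - log t on [1,2]
  have hval : ∀ t ∈ Icc (1:ℝ) 2, ρ t = 1 - Real.log t := by
    have hcts : ContinuousOn (fun t => ρ t - (1 - Real.log t)) (Icc 1 2) := by
      apply ContinuousOn.sub (hcont.mono (by intro t ht; simp at ht ⊢; linarith [ht.1]))
      apply ContinuousOn.sub continuousOn_const
      apply ContinuousOn.log (by fun_prop)
      intro t ht; simp at ht; linarith [ht.1]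
    have hder : ∀ t ∈ Ioo (1:ℝ) 2, HasDerivAt (fun t => ρ t - (1 - Real.log t)) 0 t := by
      intro t ht
      have h1 : ρ (t-1) = 1 := h01 _ (by linarith [ht.1]) (by linarith [ht.2])
      have hne : t ≠ 0 := by linarith [ht.1]
      have := (hderiv t ht.1).sub ((Real.hasDerivAt_log hne).const_sub 1)
      exact this.congr_deriv (by rw [h1]; field_simp; ring)
    have hmono := mono_aux (f' := fun _ => (0:ℝ)) hcts hder (fun x _ => le_refl 0)
    have hanti : AntitoneOn (fun t => ρ t - (1 - Real.log t)) (Icc 1 2) := by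
      apply antitoneOn_of_deriv_nonpos (convex_Icc 1 2) hcts
      · rw [interior_Icc]
        exact fun x hx => ((hder x hx).differentiableAt).differentiableWithinAt
      · rw [interior_Icc]
        intro x hx
        rw [(hder x hx).deriv]
    intro t ht
    have h1m : (1:ℝ) ∈ Icc (1:ℝ) 2 := by norm_num
    have e1 : ρ 1 - (1 - Real.log 1) = 0 := by
      rw [h01 1 zero_le_one le_rfl]; simp
    have hle := hanti h1m ht ht.1
    have hge := hmono h1m ht ht.1
    simp only at hle hge
    rw [e1] at hle hge
    linarith
  -- Step 2: comparison function G is monotone on [2, 20/9]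
  set P : ℝ → ℝ := fun t => (t-2)^2/4 - (t-2)^3/6 + (t-2)^4/32 with hP
  set G : ℝ → ℝ := fun t => ρ t + Real.log t - P t with hG
  have hmonoG : MonotoneOn G (Icc 2 (20/9)) := by
    apply mono_aux (f' := fun t =>
      -(1 - Real.log (t-1))/t + 1/t - ((t-2)/2 - (t-2)^2/2 + (t-2)^3/8))
    · apply ContinuousOn.sub
      apply ContinuousOn.add (hcont.mono (by intro t ht; simp at ht ⊢; linarith [ht.1]))
      · apply ContinuousOn.log (by fun_prop)
        intro t ht; simp at ht; linarith [ht.1]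
      · fun_prop
    · intro t ht
      have hne : t ≠ 0 := by linarith [ht.1]
      have hρ1 : ρ (t-1) = 1 - Real.log (t-1) :=
        hval (t-1) ⟨by linarith [ht.1], by linarith [ht.2]⟩
      have hPd : HasDerivAt P ((t-2)/2 - (t-2)^2/2 + (t-2)^3/8) t := by
        have hb : HasDerivAt (fun t : ℝ => t - 2) 1 t := (hasDerivAt_id t).sub_const 2
        have := (((hb.pow 2).div_const 4).sub ((hb.pow 3).div_const 6)).add
          ((hb.pow 4).div_const 32)
        exact this.congr_deriv (by ring)
      have := ((hderiv t (by linarith [ht.1])).add (Real.hasDerivAt_log hne)).sub hPd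
      exact this.congr_deriv (by rw [hρ1]; rw [one_div])
    · intro t ht
      have ht0 : (0:ℝ) < t := by linarith [ht.1]
      have hlog : (t-2) - (t-2)^2/2 ≤ Real.log (t-1) := by
        have := log_ge_aux (x := t-2) (by linarith [ht.1]) (by linarith [ht.2])
        simpa [show (1:ℝ)+(t-2) = t-1 by ring] using this
      have e : -(1 - Real.log (t-1))/t + 1/t - ((t-2)/2 - (t-2)^2/2 + (t-2)^3/8)
          = Real.log (t-1)/t - ((t-2)/2 - (t-2)^2/2 + (t-2)^3/8) := by
        field_simp
        ring
      rw [e, sub_nonneg, le_div_iff₀ ht0]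
      nlinarith [hlog, mul_nonneg (pow_nonneg (by linarith [ht.1] : (0:ℝ) ≤ t-2) 3) (by linarith [ht.2] : (0:ℝ) ≤ 4 - t)]
  -- Step 3: assemble
  have hGle : G 2 ≤ G (2*κ) :=
    hmonoG ⟨le_rfl, by norm_num⟩ ⟨by linarith, by linarith⟩ (by linarith)
  have hρ2 : ρ 2 = 1 - Real.log 2 := hval 2 (by norm_num)
  have hG2 : G 2 = 1 := by simp [hG, hP, hρ2]
  have hlog2κ : Real.log (2*κ) = Real.log 2 + Real.log κ :=
    Real.log_mul two_ne_zero (by linarith)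
  have hGk : G (2*κ) = 3*Real.log κ + Real.log 2 - P (2*κ) := by
    simp only [hG, heq, hlog2κ]; ring
  rw [hG2, hGk] at hGle
  have hlogκ : Real.log κ ≤ (κ-1) - (κ-1)^2/2 + (κ-1)^3/3 := by
    have := log_le_aux (x := κ-1) (by linarith) (by linarith)
    simpa [show (1:ℝ)+(κ-1)=κ by ring] using this
  have hlog2 := Real.log_two_lt_d9
  have hPval : P (2*κ) = (κ-1)^2 - (4/3)*(κ-1)^3 + (κ-1)^4/2 := by
    simp only [hP]; ring
  rw [hPval] at hGle
  nlinarith [hGle, hlogκ, hlog2, hκ, hcon, sq_nonneg (κ-1),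
    mul_nonneg (by linarith : (0:ℝ) ≤ 10/9 - κ) (by linarith : (0:ℝ) ≤ κ-1),
    mul_nonneg (mul_nonneg (by linarith : (0:ℝ) ≤ 10/9 - κ) (by linarith : (0:ℝ) ≤ κ-1)) (by linarith : (0:ℝ) ≤ κ-1),
    pow_nonneg (by linarith : (0:ℝ) ≤ κ-1) 3,
    pow_nonneg (by linarith : (0:ℝ) ≤ κ-1) 4]
end
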